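/- Let C ≥ 0 and let η_0, η_1, ... : [0,∞) → [0,∞) be differentiable functions satisfying η_0'(t) ≤ 0 and, for l ≥ 1, η_l'(t) ≤ C · Σ_{k=0}^{l-1} η_k(t). Suppose η_l(0) ≤ H^l / l! for all l ≥ 0 and some H ≥ 0. Then for all l ≥ 1 and t ≥ 0, η_l(t) ≤ H^l/l! + (1+H)^{l+1} · Σ_{k=1}^{l} (C t)^k / (k! (k-1)!) · (l-1)!/(l-k)!. -/

import Mathlib

open Finset

noncomputable def Bfun (C H : ℝ) (l : ℕ) (t : ℝ) : ℝ :=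
  H ^ l / (Nat.factorial l : ℝ) +
    (1 + H) ^ (l + 1) *
      ∑ k ∈ Finset.Icc 1 l,
        (C * t) ^ k / ((Nat.factorial k : ℝ) * (Nat.factorial (k - 1) : ℝ)) *
          ((Nat.factorial (l - 1) : ℝ) / (Nat.factorial (l - k) : ℝ))

noncomputable def Bfun' (C H : ℝ) (l : ℕ) (t : ℝ) : ℝ :=
  (1 + H) ^ (l + 1) *
      ∑ k ∈ Finset.Icc 1 l,
        ((k : ℝ) * (C * t) ^ (k - 1) * C) / ((Nat.factorial k : ℝ) * (Nat.factorial (k - 1) : ℝ)) *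
          ((Nat.factorial (l - 1) : ℝ) / (Nat.factorial (l - k) : ℝ))

lemma hasDerivAt_Bfun (C H : ℝ) (l : ℕ) (t : ℝ) :
    HasDerivAt (Bfun C H l) (Bfun' C H l t) t := by
  have h : ∀ k ∈ Finset.Icc 1 l, HasDerivAt
      (fun s => (C * s) ^ k / ((Nat.factorial k : ℝ) * (Nat.factorial (k - 1) : ℝ)) *
        ((Nat.factorial (l - 1) : ℝ) / (Nat.factorial (l - k) : ℝ)))
      (((k : ℝ) * (C * t) ^ (k - 1) * C) / ((Nat.factorial k : ℝ) * (Nat.factorial (k - 1) : ℝ)) *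
        ((Nat.factorial (l - 1) : ℝ) / (Nat.factorial (l - k) : ℝ))) t := by
    intro k _
    have h1 : HasDerivAt (fun s : ℝ => (C * s) ^ k) ((k : ℝ) * (C * t) ^ (k - 1) * C) t := by
      have := ((hasDerivAt_id t).const_mul C).fun_pow k
      simpa using this
    exact (h1.div_const _).mul_const _
  have hs := HasDerivAt.fun_sum h
  have h2 := (hs.const_mul ((1 + H) ^ (l + 1))).const_add (H ^ l / (Nat.factorial l : ℝ))
  exact h2

lemma range_succ_sum (f : ℕ → ℝ) (m : ℕ) :
    ∑ i ∈ Finset.range (m + 1), f i = f 0 + ∑ k ∈ Finset.Icc 1 m, f k := by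
  rw [Finset.sum_range_succ', ← Finset.Ico_add_one_right_eq_Icc, Finset.sum_Ico_eq_sum_range]
  simp [add_comm]

/-- the combinatorial identity: sum of the S_j equals T_m -/
lemma sumS (x : ℝ) (m : ℕ) :
    ∑ j ∈ Finset.range (m + 1),
        (∑ k ∈ Finset.Icc 1 j,
          x ^ k / ((Nat.factorial k : ℝ) * (Nat.factorial (k - 1) : ℝ)) *
            ((Nat.factorial (j - 1) : ℝ) / (Nat.factorial (j - k) : ℝ)))
      = ∑ k ∈ Finset.Icc 1 m,
          x ^ k / ((Nat.factorial k : ℝ) * (Nat.factorial k : ℝ)) *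
            ((Nat.factorial m : ℝ) / (Nat.factorial (m - k) : ℝ)) := by
  induction m with
  | zero => simp
  | succ m ih =>
    rw [Finset.sum_range_succ, ih,
      Finset.sum_Icc_succ_top (by omega : 1 ≤ m + 1),
      Finset.sum_Icc_succ_top (by omega : 1 ≤ m + 1), ← add_assoc,
      ← Finset.sum_add_distrib]
    have hterm : ∀ k ∈ Finset.Icc 1 m,
        x ^ k / ((Nat.factorial k : ℝ) * (Nat.factorial k : ℝ)) *
            ((Nat.factorial m : ℝ) / (Nat.factorial (m - k) : ℝ)) +
          x ^ k / ((Nat.factorial k : ℝ) * (Nat.factorial (k - 1) : ℝ)) *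
            ((Nat.factorial (m + 1 - 1) : ℝ) / (Nat.factorial (m + 1 - k) : ℝ))
        = x ^ k / ((Nat.factorial k : ℝ) * (Nat.factorial k : ℝ)) *
            ((Nat.factorial (m + 1) : ℝ) / (Nat.factorial (m + 1 - k) : ℝ)) := by
      intro k hk
      obtain ⟨hk1, hkm⟩ := Finset.mem_Icc.mp hk
      obtain ⟨a, rfl⟩ : ∃ a, m = k + a := ⟨m - k, by omega⟩
      have e1 : k + a - k = a := by omega
      have e2 : k + a + 1 - k = a + 1 := by omega
      have e3 : k + a + 1 - 1 = k + a := by omega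
      rw [e1, e2, e3]
      have hfk : (Nat.factorial k : ℝ) = (k : ℝ) * (Nat.factorial (k - 1) : ℝ) := by
        exact_mod_cast (Nat.mul_factorial_pred (by omega)).symm
      rw [Nat.factorial_succ (k + a), Nat.factorial_succ a, hfk]
      have h1 : (Nat.factorial (k - 1) : ℝ) ≠ 0 := Nat.cast_ne_zero.mpr (Nat.factorial_ne_zero _)
      have h2 : (Nat.factorial a : ℝ) ≠ 0 := Nat.cast_ne_zero.mpr (Nat.factorial_ne_zero _)
      have h3 : (k : ℝ) ≠ 0 := by positivity
      have h4 : ((a : ℝ) + 1) ≠ 0 := by positivity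
      push_cast
      field_simp
      ring
    rw [Finset.sum_congr rfl hterm]
    congr 1
    have e2 : m + 1 - (m + 1) = 0 := by omega
    have e3 : m + 1 - 1 = m := by omega
    rw [e2, e3, Nat.factorial_succ m]
    have h1 : (Nat.factorial m : ℝ) ≠ 0 := Nat.cast_ne_zero.mpr (Nat.factorial_ne_zero _)
    have h4 : ((m : ℝ) + 1) ≠ 0 := by positivity
    push_cast
    field_simp

lemma exp_sum_le (H : ℝ) (hH : 0 ≤ H) (m : ℕ) :
    ∑ j ∈ Finset.range (m + 1), H ^ j / (Nat.factorial j : ℝ) ≤ (1 + H) ^ (m + 2) := by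
  have hpow : (1 + H) ^ (m + 2)
      = ∑ j ∈ Finset.range (m + 3), H ^ j * 1 ^ (m + 2 - j) * ((m + 2).choose j : ℝ) := by
    rw [add_comm 1 H, add_pow]
  rw [hpow]
  calc ∑ j ∈ Finset.range (m + 1), H ^ j / (Nat.factorial j : ℝ)
      ≤ ∑ j ∈ Finset.range (m + 1), H ^ j * 1 ^ (m + 2 - j) * ((m + 2).choose j : ℝ) := by
        apply Finset.sum_le_sum
        intro j hj
        have hj' : j ≤ m + 2 := by have := Finset.mem_range.mp hj; omega
        have hc : (1 : ℝ) ≤ ((m + 2).choose j : ℝ) := by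
          exact_mod_cast Nat.one_le_iff_ne_zero.mpr (Nat.choose_pos hj').ne'
        have hf : (1 : ℝ) ≤ (Nat.factorial j : ℝ) := by
          exact_mod_cast Nat.one_le_iff_ne_zero.mpr (Nat.factorial_ne_zero j)
        have hHj : (0:ℝ) ≤ H ^ j := pow_nonneg hH j
        have : H ^ j / (Nat.factorial j : ℝ) ≤ H ^ j := by
          apply div_le_self hHj hf
        calc H ^ j / (Nat.factorial j : ℝ) ≤ H ^ j := this
          _ = H ^ j * 1 := (mul_one _).symm
          _ ≤ H ^ j * ((m + 2).choose j : ℝ) := by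
              exact mul_le_mul_of_nonneg_left hc hHj
          _ = H ^ j * 1 ^ (m + 2 - j) * ((m + 2).choose j : ℝ) := by ring
    _ ≤ ∑ j ∈ Finset.range (m + 3), H ^ j * 1 ^ (m + 2 - j) * ((m + 2).choose j : ℝ) := by
        apply Finset.sum_le_sum_of_subset_of_nonneg
        · exact Finset.range_subset_range.mpr (by omega)
        · intro j _ _
          positivity

lemma key_ineq (C H : ℝ) (hC : 0 ≤ C) (hH : 0 ≤ H) (m : ℕ) (t : ℝ) (ht : 0 ≤ t) :
    C * ∑ j ∈ Finset.range (m + 1), Bfun C H j t ≤ Bfun' C H (m + 1) t := by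
  set x := C * t with hxdef
  have hx0 : 0 ≤ x := mul_nonneg hC ht
  have hG : (1 : ℝ) ≤ 1 + H := by linarith
  -- rewrite Bfun' (m+1)
  have hB' : Bfun' C H (m + 1) t
      = C * ((1 + H) ^ (m + 2) *
          (1 + ∑ k ∈ Finset.Icc 1 m,
            x ^ k / ((Nat.factorial k : ℝ) * (Nat.factorial k : ℝ)) *
              ((Nat.factorial m : ℝ) / (Nat.factorial (m - k) : ℝ)))) := by
    rw [Bfun', ← Finset.Ico_add_one_right_eq_Icc, Finset.sum_Ico_eq_sum_range]
    have e : m + 1 + 1 - 1 = m + 1 := by omega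
    rw [e]
    have hterm : ∀ i ∈ Finset.range (m + 1),
        ((1 + i : ℕ) : ℝ) * (C * t) ^ (1 + i - 1) * C /
            ((Nat.factorial (1 + i) : ℝ) * (Nat.factorial (1 + i - 1) : ℝ)) *
          ((Nat.factorial (m + 1 - 1) : ℝ) / (Nat.factorial (m + 1 - (1 + i)) : ℝ))
        = C * (x ^ i / ((Nat.factorial i : ℝ) * (Nat.factorial i : ℝ)) *
            ((Nat.factorial m : ℝ) / (Nat.factorial (m - i) : ℝ))) := by
      intro i hi
      have e1 : 1 + i - 1 = i := by omega
      have e2 : m + 1 - 1 = m := by omega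
      have e3 : m + 1 - (1 + i) = m - i := by omega
      rw [e1, e2, e3, add_comm 1 i, Nat.factorial_succ]
      have h1 : (Nat.factorial i : ℝ) ≠ 0 := Nat.cast_ne_zero.mpr (Nat.factorial_ne_zero _)
      have h2 : ((i : ℝ) + 1) ≠ 0 := by positivity
      push_cast
      rw [← hxdef]
      field_simp
    rw [Finset.sum_congr rfl hterm, ← Finset.mul_sum, range_succ_sum]
    have e0 : x ^ 0 / ((Nat.factorial 0 : ℝ) * (Nat.factorial 0 : ℝ)) *
        ((Nat.factorial m : ℝ) / (Nat.factorial (m - 0) : ℝ)) = 1 := by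
      have hm : (Nat.factorial m : ℝ) ≠ 0 := Nat.cast_ne_zero.mpr (Nat.factorial_ne_zero m)
      simp [div_self hm]
    rw [e0]
    ring
  rw [hB']
  -- bound the left side
  have hsplit : ∑ j ∈ Finset.range (m + 1), Bfun C H j t
      = ∑ j ∈ Finset.range (m + 1), H ^ j / (Nat.factorial j : ℝ)
        + ∑ j ∈ Finset.range (m + 1), (1 + H) ^ (j + 1) *
            (∑ k ∈ Finset.Icc 1 j,
              x ^ k / ((Nat.factorial k : ℝ) * (Nat.factorial (k - 1) : ℝ)) *
                ((Nat.factorial (j - 1) : ℝ) / (Nat.factorial (j - k) : ℝ))) := by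
    rw [← Finset.sum_add_distrib]
    exact Finset.sum_congr rfl fun j _ => rfl
  have hSnonneg : ∀ j : ℕ, 0 ≤ ∑ k ∈ Finset.Icc 1 j,
      x ^ k / ((Nat.factorial k : ℝ) * (Nat.factorial (k - 1) : ℝ)) *
        ((Nat.factorial (j - 1) : ℝ) / (Nat.factorial (j - k) : ℝ)) := by
    intro j
    apply Finset.sum_nonneg
    intro k _
    apply mul_nonneg (div_nonneg (pow_nonneg hx0 _) (by positivity)) (by positivity)
  have h2 : ∑ j ∈ Finset.range (m + 1), (1 + H) ^ (j + 1) *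
        (∑ k ∈ Finset.Icc 1 j,
          x ^ k / ((Nat.factorial k : ℝ) * (Nat.factorial (k - 1) : ℝ)) *
            ((Nat.factorial (j - 1) : ℝ) / (Nat.factorial (j - k) : ℝ)))
      ≤ (1 + H) ^ (m + 2) * ∑ k ∈ Finset.Icc 1 m,
          x ^ k / ((Nat.factorial k : ℝ) * (Nat.factorial k : ℝ)) *
            ((Nat.factorial m : ℝ) / (Nat.factorial (m - k) : ℝ)) := by
    rw [← sumS x m, Finset.mul_sum]
    apply Finset.sum_le_sum
    intro j hj
    apply mul_le_mul_of_nonneg_right _ (hSnonneg j)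
    exact pow_le_pow_right₀ hG (by have := Finset.mem_range.mp hj; omega)
  have h1 := exp_sum_le H hH m
  apply mul_le_mul_of_nonneg_left _ hC
  rw [hsplit]
  calc ∑ j ∈ Finset.range (m + 1), H ^ j / (Nat.factorial j : ℝ)
        + ∑ j ∈ Finset.range (m + 1), (1 + H) ^ (j + 1) *
            (∑ k ∈ Finset.Icc 1 j,
              x ^ k / ((Nat.factorial k : ℝ) * (Nat.factorial (k - 1) : ℝ)) *
                ((Nat.factorial (j - 1) : ℝ) / (Nat.factorial (j - k) : ℝ)))
      ≤ (1 + H) ^ (m + 2) + (1 + H) ^ (m + 2) * ∑ k ∈ Finset.Icc 1 m,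
          x ^ k / ((Nat.factorial k : ℝ) * (Nat.factorial k : ℝ)) *
            ((Nat.factorial m : ℝ) / (Nat.factorial (m - k) : ℝ)) := add_le_add h1 h2
    _ = (1 + H) ^ (m + 2) *
          (1 + ∑ k ∈ Finset.Icc 1 m,
            x ^ k / ((Nat.factorial k : ℝ) * (Nat.factorial k : ℝ)) *
              ((Nat.factorial m : ℝ) / (Nat.factorial (m - k) : ℝ))) := by ring

lemma mono_aux (f f' : ℝ → ℝ) (hd : ∀ t, 0 ≤ t → HasDerivAt f (f' t) t)
    (h0 : ∀ t, 0 ≤ t → 0 ≤ f' t) {t : ℝ} (ht : 0 ≤ t) : f 0 ≤ f t := by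
  have hmono : MonotoneOn f (Set.Ici (0 : ℝ)) := by
    apply monotoneOn_of_deriv_nonneg (convex_Ici 0)
    · intro x hx
      exact (hd x hx).continuousAt.continuousWithinAt
    · intro x hx
      rw [interior_Ici] at hx
      exact (hd x (le_of_lt hx)).differentiableAt.differentiableWithinAt
    · intro x hx
      rw [interior_Ici] at hx
      rw [(hd x hx.le).deriv]
      exact h0 x hx.le
  exact hmono Set.self_mem_Ici ht ht

lemma Bfun_zero (C H : ℝ) (l : ℕ) : Bfun C H l 0 = H ^ l / (Nat.factorial l : ℝ) := by
  rw [Bfun]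
  have : ∑ k ∈ Finset.Icc 1 l,
      (C * 0) ^ k / ((Nat.factorial k : ℝ) * (Nat.factorial (k - 1) : ℝ)) *
        ((Nat.factorial (l - 1) : ℝ) / (Nat.factorial (l - k) : ℝ)) = 0 := by
    apply Finset.sum_eq_zero
    intro k hk
    have hk1 : k ≠ 0 := by have := (Finset.mem_Icc.mp hk).1; omega
    simp [zero_pow hk1]
  rw [this]
  ring

theorem stmt_2 (C H : ℝ) (hC : 0 ≤ C) (hH : 0 ≤ H)
    (η η' : ℕ → ℝ → ℝ)
    (hpos : ∀ l t, 0 ≤ t → 0 ≤ η l t)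
    (hderiv : ∀ l t, 0 ≤ t → HasDerivAt (η l) (η' l t) t)
    (h0 : ∀ t, 0 ≤ t → η' 0 t ≤ 0)
    (hrec : ∀ l t, 1 ≤ l → 0 ≤ t → η' l t ≤ C * ∑ k ∈ Finset.range l, η k t)
    (hinit : ∀ l : ℕ, η l 0 ≤ H ^ l / (Nat.factorial l : ℝ)) :
    ∀ l : ℕ, ∀ t : ℝ, 1 ≤ l → 0 ≤ t →
      η l t ≤ H ^ l / (Nat.factorial l : ℝ) +
        (1 + H) ^ (l + 1) *
          ∑ k ∈ Finset.Icc 1 l,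
            (C * t) ^ k / ((Nat.factorial k : ℝ) * (Nat.factorial (k - 1) : ℝ)) *
              ((Nat.factorial (l - 1) : ℝ) / (Nat.factorial (l - k) : ℝ)) := by
  have main : ∀ l, ∀ t : ℝ, 0 ≤ t → η l t ≤ Bfun C H l t := by
    intro l
    induction l using Nat.strong_induction_on with
    | _ l ih =>
      match l with
      | 0 =>
        intro t ht
        have hmono : η 0 t ≤ η 0 0 := by
          have := mono_aux (fun s => -η 0 s) (fun s => -(η' 0 s))
            (fun s hs => (hderiv 0 s hs).neg) (fun s hs => neg_nonneg.mpr (h0 s hs)) ht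
          simpa using this
        have h1 : η 0 0 ≤ 1 := by simpa using hinit 0
        have h2 : Bfun C H 0 t = 1 := by simp [Bfun]
        linarith
      | (m + 1) =>
        intro t ht
        have hφd : ∀ s : ℝ, 0 ≤ s → HasDerivAt (fun u => Bfun C H (m + 1) u - η (m + 1) u)
            (Bfun' C H (m + 1) s - η' (m + 1) s) s :=
          fun s hs => (hasDerivAt_Bfun C H (m + 1) s).sub (hderiv (m + 1) s hs)
        have hφ' : ∀ s : ℝ, 0 ≤ s → 0 ≤ Bfun' C H (m + 1) s - η' (m + 1) s := by
          intro s hs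
          have h1 : η' (m + 1) s ≤ C * ∑ k ∈ Finset.range (m + 1), η k s :=
            hrec (m + 1) s (by omega) hs
          have h2 : C * ∑ k ∈ Finset.range (m + 1), η k s
              ≤ C * ∑ k ∈ Finset.range (m + 1), Bfun C H k s := by
            apply mul_le_mul_of_nonneg_left _ hC
            apply Finset.sum_le_sum
            intro k hk
            exact ih k (Finset.mem_range.mp hk) s hs
          have h3 := key_ineq C H hC hH m s hs
          linarith
        have h00 : (0 : ℝ) ≤ Bfun C H (m + 1) 0 - η (m + 1) 0 := by
          have h1 := hinit (m + 1)
          have h2 := Bfun_zero C H (m + 1)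
          linarith
        have hmono := mono_aux (fun u => Bfun C H (m + 1) u - η (m + 1) u)
          (fun s => Bfun' C H (m + 1) s - η' (m + 1) s) hφd hφ' ht
        linarith
  intro l t _ ht
  have := main l t ht
  rw [Bfun] at this
  exact this
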